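/- Let A be an n×n unitary matrix that is upper Hessenberg (A i j = 0 for i ≥ j+2) with upper bandwidth m, i.e., A i j = 0 whenever j ≥ i + m + 1, where m + 1 < n. Then A is reducible in the sense that there exists k with 0 < k < n such that A maps span{e₀,...,e_{k−1}} to itself and span{e_k,...,e_{n−1}} to itself; equivalently A is a direct sum of two smaller blocks. -/

import Mathlib

open Matrix

/-- a unitary `n×n` matrix `A` that is upper Hessenberg (`A i j = 0` for
`i ≥ j + 2`) with finite upper bandwidth `m` (`A i j = 0` for `j ≥ i + m + 1`), where
`m + 1 < n`, is reducible: there is `k` with `0 < k < n` such that `A` is the direct sum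
of a `k×k` block and an `(n-k)×(n-k)` block, i.e. `A i j = 0` whenever exactly one of
`i, j` is `< k`. -/
theorem stmt13 (n m : ℕ) (hm : m + 1 < n) (A : Matrix (Fin n) (Fin n) ℂ)
    (hU : Aᴴ * A = 1)
    (hHess : ∀ i j : Fin n, j.val + 2 ≤ i.val → A i j = 0)
    (hband : ∀ i j : Fin n, i.val + m + 1 ≤ j.val → A i j = 0) :
    ∃ k : ℕ, 0 < k ∧ k < n ∧
      ∀ i j : Fin n, ((i.val < k ∧ k ≤ j.val) ∨ (j.val < k ∧ k ≤ i.val)) → A i j = 0 := by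
  have hn : 0 < n := by omega
  by_cases hex : ∃ k : Fin n, 0 < k.val ∧
      A k ⟨k.val - 1, lt_of_le_of_lt (Nat.sub_le _ _) k.isLt⟩ = 0
  · obtain ⟨k, hk0, hkz⟩ := hex
    -- lower-left block is zero
    have llz : ∀ i j : Fin n, j.val < k.val → k.val ≤ i.val → A i j = 0 := by
      intro i j hj hi
      rcases Nat.lt_or_ge i.val (j.val + 2) with h | h
      · have hi' : i = k := Fin.ext (by omega)
        have hj' : j = ⟨k.val - 1, lt_of_le_of_lt (Nat.sub_le _ _) k.isLt⟩ :=
          Fin.ext (by simp; omega)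
        rw [hi', hj']; exact hkz
      · exact hHess i j h
    have hU' : A * Aᴴ = 1 := mul_eq_one_comm.mp hU
    -- column and row norm sums
    have hcol : ∀ j : Fin n, ∑ i, Complex.normSq (A i j) = 1 := by
      intro j
      have h1 : (Aᴴ * A) j j = 1 := by rw [hU, Matrix.one_apply_eq]
      rw [Matrix.mul_apply] at h1
      have h2 : ∑ i, (Aᴴ) j i * A i j = ((∑ i, Complex.normSq (A i j) : ℝ) : ℂ) := by
        push_cast
        refine Finset.sum_congr rfl fun i _ => ?_
        rw [Matrix.conjTranspose_apply]
        exact (Complex.normSq_eq_conj_mul_self).symm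
      rw [h2] at h1
      exact_mod_cast h1
    have hrow : ∀ i : Fin n, ∑ j, Complex.normSq (A i j) = 1 := by
      intro i
      have h1 : (A * Aᴴ) i i = 1 := by rw [hU', Matrix.one_apply_eq]
      rw [Matrix.mul_apply] at h1
      have h2 : ∑ j, A i j * (Aᴴ) j i = ((∑ j, Complex.normSq (A i j) : ℝ) : ℂ) := by
        push_cast
        refine Finset.sum_congr rfl fun j _ => ?_
        rw [Matrix.conjTranspose_apply, Complex.star_def]
        exact Complex.mul_conj (A i j)
      rw [h2] at h1
      exact_mod_cast h1
    -- counting argument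
    have cardIio : (Finset.Iio k).card = k.val := by
      simp
    have A1 : ∑ i ∈ Finset.Iio k, ∑ j, Complex.normSq (A i j) = (k.val : ℝ) := by
      rw [Finset.sum_congr rfl fun i _ => hrow i, Finset.sum_const, cardIio]
      simp
    have A2 : ∑ j ∈ Finset.Iio k, ∑ i, Complex.normSq (A i j) = (k.val : ℝ) := by
      rw [Finset.sum_congr rfl fun j _ => hcol j, Finset.sum_const, cardIio]
      simp
    have A3 : ∑ j ∈ Finset.Iio k, ∑ i ∈ Finset.Iio k, Complex.normSq (A i j)
        = (k.val : ℝ) := by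
      rw [← A2]
      refine Finset.sum_congr rfl fun j hj => ?_
      rw [← Finset.sum_add_sum_compl (Finset.Iio k)]
      have : ∑ i ∈ (Finset.Iio k)ᶜ, Complex.normSq (A i j) = 0 := by
        refine Finset.sum_eq_zero fun i hi => ?_
        rw [Finset.mem_compl, Finset.mem_Iio, not_lt] at hi
        rw [Finset.mem_Iio] at hj
        rw [llz i j hj hi]
        simp
      rw [this, add_zero]
    have A4 : ∑ i ∈ Finset.Iio k, ∑ j ∈ Finset.Iio k, Complex.normSq (A i j)
        = (k.val : ℝ) := by
      rw [Finset.sum_comm]; exact A3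
    have E0 : ∑ i ∈ Finset.Iio k, ∑ j ∈ (Finset.Iio k)ᶜ, Complex.normSq (A i j) = 0 := by
      have hsplit : ∀ i ∈ Finset.Iio k,
          ∑ j, Complex.normSq (A i j)
            = ∑ j ∈ Finset.Iio k, Complex.normSq (A i j)
              + ∑ j ∈ (Finset.Iio k)ᶜ, Complex.normSq (A i j) := by
        intro i _
        rw [Finset.sum_add_sum_compl]
      rw [Finset.sum_congr rfl hsplit, Finset.sum_add_distrib, A4] at A1
      linarith
    have urz : ∀ i j : Fin n, i.val < k.val → k.val ≤ j.val → A i j = 0 := by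
      intro i j hi hj
      have h1 := (Finset.sum_eq_zero_iff_of_nonneg
        (fun i _ => Finset.sum_nonneg fun j _ => Complex.normSq_nonneg _)).mp E0
        i (Finset.mem_Iio.mpr (by exact hi))
      have h2 := (Finset.sum_eq_zero_iff_of_nonneg
        (fun j _ => Complex.normSq_nonneg _)).mp h1
        j (by rw [Finset.mem_compl, Finset.mem_Iio, not_lt]; exact hj)
      exact Complex.normSq_eq_zero.mp h2
    exact ⟨k.val, hk0, k.isLt, fun i j h => by
      rcases h with ⟨h1, h2⟩ | ⟨h1, h2⟩
      · exact urz i j h1 h2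
      · exact llz i j h1 h2⟩
  · -- all subdiagonal entries nonzero: contradiction
    exfalso
    push_neg at hex
    have hsub : ∀ N : ℕ, (h : N + 1 < n) → A ⟨N + 1, h⟩ ⟨N, by omega⟩ ≠ 0 := by
      intro N h
      have := hex ⟨N + 1, h⟩ (by simp)
      simp at this; exact this
    have hlast : n - 1 < n := by omega
    set c : Fin n := ⟨n - 1, hlast⟩ with hc
    have key : ∀ N : ℕ, ∀ i : Fin n, i.val ≤ N → A i c = 0 := by
      intro N
      induction N with
      | zero =>
        intro i hi
        apply hband
        simp [hc]
        omega
      | succ N IH =>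
        intro i hi
        rcases Nat.lt_or_ge i.val (N + 1) with h | h
        · exact IH i (by omega)
        · have hival : i.val = N + 1 := by omega
          have hNn : N + 1 < n := hival ▸ i.isLt
          set jf : Fin n := ⟨N, by omega⟩ with hjf
          have hne : jf ≠ c := by
            refine Fin.ne_of_val_ne ?_
            simp [hjf, hc]
            omega
          have horth : (Aᴴ * A) jf c = 0 := by
            rw [hU, Matrix.one_apply_ne hne]
          rw [Matrix.mul_apply] at horth
          have hsingle : ∑ l, (Aᴴ) jf l * A l c
              = (starRingEnd ℂ) (A i jf) * A i c := by
            refine Finset.sum_eq_single i (fun l _ hl => ?_) (by simp)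
            rcases Nat.lt_or_ge l.val (N + 1) with h' | h'
            · rw [IH l (by omega), mul_zero]
            · have : N + 2 ≤ l.val := by
                rcases Nat.lt_or_ge l.val (N + 2) with h'' | h''
                · exact absurd (Fin.ext (by omega) : l = i) hl
                · exact h''
              rw [Matrix.conjTranspose_apply, hHess l jf (by simp [hjf]; omega)]
              simp
          rw [hsingle] at horth
          rcases mul_eq_zero.mp horth with h' | h'
          · exact absurd (by
              rw [show (⟨N + 1, hNn⟩ : Fin n) = i from (Fin.ext hival).symm]
              simpa using h') (hsub N hNn)
          · exact h'
    have hdiag : (Aᴴ * A) c c = 1 := by rw [hU, Matrix.one_apply_eq]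
    rw [Matrix.mul_apply] at hdiag
    have : ∑ l, (Aᴴ) c l * A l c = 0 := by
      refine Finset.sum_eq_zero fun l _ => ?_
      rw [key n l (le_of_lt l.isLt), mul_zero]
    rw [this] at hdiag
    exact zero_ne_one hdiag
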